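/- Let f : (0, ∞) → ℝ be given by f(s) = √(s/(1+s)). Then for every s > 0, f is twice differentiable at s with f'(s) = ½·s^{−1/2}·(1+s)^{−3/2}, and the two principal-curvature expressions satisfy −f''(s)/(1 + f'(s)²)^{3/2} = 2·(1 + 4s(1+s)³)^{−3/2}·(1+s)²·(1+4s) and 1/(f(s)·√(1 + f'(s)²)) = 2·(1 + 4s(1+s)³)^{−1/2}·(1+s)²; moreover 0 < 2·(1 + 4s(1+s)³)^{−3/2}·(1+s)²·(1+4s) < 2·(1 + 4s(1+s)³)^{−1/2}·(1+s)². -/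

import Mathlib

open Real Set

noncomputable section

lemma rpow_half_nat {x : ℝ} (hx : 0 ≤ x) (n : ℕ) :
    x ^ ((n : ℝ)/2) = Real.sqrt x ^ n := by
  rw [show ((n:ℝ)/2) = (1/2) * n by ring, Real.rpow_mul hx, Real.rpow_natCast,
    Real.sqrt_eq_rpow]

lemma rpow_neg_half_nat {x : ℝ} (hx : 0 ≤ x) (n : ℕ) :
    x ^ (-(n : ℝ)/2) = (Real.sqrt x ^ n)⁻¹ := by
  rw [neg_div, Real.rpow_neg hx, rpow_half_nat hx]

def profileF (s : ℝ) : ℝ := Real.sqrt (s / (1 + s))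

def gAux (s : ℝ) : ℝ := (1/2) * s ^ (-(1:ℝ)/2) * (1+s) ^ (-(3:ℝ)/2)

def g2Aux (s : ℝ) : ℝ :=
  (1/2) * ((-(1:ℝ)/2) * s ^ (-(3:ℝ)/2)) * (1+s) ^ (-(3:ℝ)/2)
    + (1/2) * s ^ (-(1:ℝ)/2) * ((-(3:ℝ)/2) * (1+s) ^ (-(5:ℝ)/2))

lemma lemA {s : ℝ} (hs : 0 < s) : HasDerivAt profileF (gAux s) s := by
  have hs1 : (0:ℝ) < 1 + s := by linarith
  have ha : 0 < Real.sqrt s := Real.sqrt_pos.mpr hs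
  have hb : 0 < Real.sqrt (1+s) := Real.sqrt_pos.mpr hs1
  have ha2 : Real.sqrt s ^ 2 = s := Real.sq_sqrt hs.le
  have hb2 : Real.sqrt (1+s) ^ 2 = 1 + s := Real.sq_sqrt hs1.le
  have h1 : HasDerivAt (fun t : ℝ => t / (1 + t)) (1/(1+s)^2) s := by
    have := (hasDerivAt_id s).div ((hasDerivAt_const s (1:ℝ)).add (hasDerivAt_id s))
      (by positivity)
    refine this.congr_deriv ?_
    simp only [Pi.add_apply, id_eq]; ring
  have h2 := h1.sqrt (by positivity)
  convert h2 using 1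
  · rfl
  unfold gAux
  rw [show (-(1:ℝ)/2) = (-((1:ℕ):ℝ)/2) by norm_num,
    show (-(3:ℝ)/2) = (-((3:ℕ):ℝ)/2) by norm_num,
    rpow_neg_half_nat hs.le, rpow_neg_half_nat hs1.le,
    Real.sqrt_div hs.le]
  have hb4 : Real.sqrt (1+s) ^ 4 = (1+s)^2 := by
    rw [show (4:ℕ) = 2*2 from rfl, pow_mul, hb2]
  field_simp
  linear_combination (-(1:ℝ)) * hb4

lemma lemB {s : ℝ} (hs : 0 < s) : HasDerivAt gAux (g2Aux s) s := by
  have hs1 : (0:ℝ) < 1 + s := by linarith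
  have h1 : HasDerivAt (fun t : ℝ => t ^ (-(1:ℝ)/2))
      ((-(1:ℝ)/2) * s ^ (-(1:ℝ)/2 - 1)) s :=
    Real.hasDerivAt_rpow_const (Or.inl hs.ne')
  have h0 : HasDerivAt (fun t : ℝ => 1 + t) 1 s := by
    exact (hasDerivAt_id s).const_add 1
  have h2 : HasDerivAt (fun t : ℝ => (1+t) ^ (-(3:ℝ)/2))
      ((-(3:ℝ)/2) * (1+s) ^ (-(3:ℝ)/2 - 1) * 1) s :=
    (Real.hasDerivAt_rpow_const (Or.inl hs1.ne')).comp s h0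
  have h3 := (h1.const_mul (1/2 : ℝ)).mul h2
  have : HasDerivAt gAux
      ((1/2 * ((-(1:ℝ)/2) * s ^ (-(1:ℝ)/2 - 1))) * (1+s) ^ (-(3:ℝ)/2)
        + (1/2 * s ^ (-(1:ℝ)/2)) * ((-(3:ℝ)/2) * (1+s) ^ (-(3:ℝ)/2 - 1) * 1)) s := h3
  convert this using 1
  unfold g2Aux
  rw [show (-(1:ℝ)/2 - 1) = -(3:ℝ)/2 by norm_num, show (-(3:ℝ)/2 - 1) = -(5:ℝ)/2 by norm_num]
  ring

lemma sq_rpow_three_halves {x : ℝ} (hx : 0 ≤ x) : (x^2) ^ ((3:ℝ)/2) = x^3 := by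
  rw [← Real.rpow_natCast x 2, ← Real.rpow_mul hx,
    show ((2:ℕ):ℝ) * ((3:ℝ)/2) = ((3:ℕ):ℝ) by norm_num, Real.rpow_natCast]

theorem stmt7 :
    ∀ s > (0 : ℝ),
      DifferentiableAt ℝ profileF s ∧
      DifferentiableAt ℝ (deriv profileF) s ∧
      deriv profileF s = (1 / 2) * s ^ (-(1 : ℝ) / 2) * (1 + s) ^ (-(3 : ℝ) / 2) ∧
      -(deriv (deriv profileF) s) / (1 + (deriv profileF s) ^ 2) ^ ((3 : ℝ) / 2)
        = 2 * (1 + 4 * s * (1 + s) ^ 3) ^ (-(3 : ℝ) / 2) * (1 + s) ^ 2 * (1 + 4 * s) ∧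
      1 / (profileF s * Real.sqrt (1 + (deriv profileF s) ^ 2))
        = 2 * (1 + 4 * s * (1 + s) ^ 3) ^ (-(1 : ℝ) / 2) * (1 + s) ^ 2 ∧
      0 < 2 * (1 + 4 * s * (1 + s) ^ 3) ^ (-(3 : ℝ) / 2) * (1 + s) ^ 2 * (1 + 4 * s) ∧
      2 * (1 + 4 * s * (1 + s) ^ 3) ^ (-(3 : ℝ) / 2) * (1 + s) ^ 2 * (1 + 4 * s)
        < 2 * (1 + 4 * s * (1 + s) ^ 3) ^ (-(1 : ℝ) / 2) * (1 + s) ^ 2 := by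
  intro s hs
  have hs1 : (0:ℝ) < 1 + s := by linarith
  have hX : (0:ℝ) < 1 + 4*s*(1+s)^3 := by positivity
  have hev : deriv profileF =ᶠ[nhds s] gAux :=
    Filter.eventuallyEq_of_mem (Ioi_mem_nhds hs) (fun t ht => (lemA ht).deriv)
  have hd1 : deriv profileF s = gAux s := (lemA hs).deriv
  have hdiff2 : DifferentiableAt ℝ (deriv profileF) s :=
    (lemB hs).differentiableAt.congr_of_eventuallyEq hev
  have hd2 : deriv (deriv profileF) s = g2Aux s := by
    rw [Filter.EventuallyEq.deriv_eq hev, (lemB hs).deriv]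
  set a := Real.sqrt s with hadef
  set b := Real.sqrt (1+s) with hbdef
  set c := Real.sqrt (1 + 4*s*(1+s)^3) with hcdef
  have ha : 0 < a := Real.sqrt_pos.mpr hs
  have hb : 0 < b := Real.sqrt_pos.mpr hs1
  have hc : 0 < c := Real.sqrt_pos.mpr hX
  have ha2 : a^2 = s := Real.sq_sqrt hs.le
  have hb2 : b^2 = 1+s := Real.sq_sqrt hs1.le
  have hc2 : c^2 = 1 + 4*s*(1+s)^3 := Real.sq_sqrt hX.le
  have hc2' : 1 + 4*a^2*b^6 = c^2 := by rw [hc2, ← hb2, ← ha2]; ring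
  have hga : gAux s = 1/(2*a*b^3) := by
    unfold gAux
    rw [show (-(1:ℝ)/2) = (-((1:ℕ):ℝ)/2) by norm_num,
      show (-(3:ℝ)/2) = (-((3:ℕ):ℝ)/2) by norm_num,
      rpow_neg_half_nat hs.le, rpow_neg_half_nat hs1.le]
    field_simp
    rfl
  have hg2 : g2Aux s = -(1+4*s)/(4*a^3*b^5) := by
    unfold g2Aux
    rw [show (-(1:ℝ)/2) = (-((1:ℕ):ℝ)/2) by norm_num,
      show (-(3:ℝ)/2) = (-((3:ℕ):ℝ)/2) by norm_num,
      show (-(5:ℝ)/2) = (-((5:ℕ):ℝ)/2) by norm_num,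
      rpow_neg_half_nat hs.le, rpow_neg_half_nat hs1.le,
      rpow_neg_half_nat hs.le, rpow_neg_half_nat hs1.le,
      ← hb2, ← ha2]
    have hba : b^2 = 1 + a^2 := by rw [hb2, ha2]
    simp only [Real.sqrt_sq ha.le, Real.sqrt_sq hb.le]
    field_simp
    linear_combination (-(4:ℝ)) * hba
  have e3 : (1 + 4*s*(1+s)^3 : ℝ) ^ (-(3:ℝ)/2) = (c^3)⁻¹ := by
    rw [show (-(3:ℝ)/2) = (-((3:ℕ):ℝ)/2) by norm_num]
    exact rpow_neg_half_nat hX.le 3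
  have e1 : (1 + 4*s*(1+s)^3 : ℝ) ^ (-(1:ℝ)/2) = c⁻¹ := by
    rw [show (-(1:ℝ)/2) = (-((1:ℕ):ℝ)/2) by norm_num, rpow_neg_half_nat hX.le 1, pow_one]
  have h1f : 1 + (gAux s)^2 = (c/(2*a*b^3))^2 := by
    rw [hga]
    field_simp
    linear_combination hc2'
  refine ⟨(lemA hs).differentiableAt, hdiff2, by rw [hd1]; rfl, ?_, ?_, ?_, ?_⟩
  · rw [hd1, hd2, h1f, sq_rpow_three_halves (by positivity), hg2, e3, ← hb2]
    rw [div_pow]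
    field_simp
    ring
  · have hpf : profileF s = a/b := by
      unfold profileF; rw [hadef, hbdef, Real.sqrt_div hs.le]
    have hsq : Real.sqrt (1 + (gAux s)^2) = c/(2*a*b^3) := by
      rw [h1f, Real.sqrt_sq (by positivity)]
    rw [hd1, hpf, hsq, e1, ← hb2]
    field_simp
  · rw [e3]; positivity
  · rw [e3, e1]
    have key : (1+4*s) < c^2 := by rw [hc2]; nlinarith [pow_pos hs 2, pow_pos hs 3, pow_pos hs 4]
    calc 2 * (c^3)⁻¹ * (1+s)^2 * (1+4*s)
        < 2 * (c^3)⁻¹ * (1+s)^2 * c^2 := by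
          apply mul_lt_mul_of_pos_left key (by positivity)
      _ = 2 * c⁻¹ * (1+s)^2 := by field_simp

end
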